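/- Let n ≥ 3 be odd and let V_n be the vertex set of the regular n-gon inscribed in the unit circle centered at the origin. Then the number of 3-element subsets of V_n whose convex hull contains the origin in its interior equals n(n−1)(n+1)/24. -/

import Mathlib

/-- The vertex set of the regular `n`-gon inscribed in the unit circle centered at the
origin: the points `(cos(2πk/n), sin(2πk/n))` for `k = 0, 1, ..., n-1`. -/
noncomputable def regularNgon (n : ℕ) : Finset (ℝ × ℝ) :=
  (Finset.range n).image
    (fun k : ℕ => (Real.cos (2 * Real.pi * k / n), Real.sin (2 * Real.pi * k / n)))


open Real Finset

noncomputable def crs (u v : ℝ × ℝ) : ℝ := u.1 * v.2 - u.2 * v.1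

lemma collinear_of_crs_eq_zero {p q r : ℝ × ℝ}
    (h : (q.1 - p.1) * (r.2 - p.2) - (q.2 - p.2) * (r.1 - p.1) = 0) :
    Collinear ℝ ({p, q, r} : Set (ℝ × ℝ)) := by
  by_cases hq : q = p
  · have hset : ({p, q, r} : Set (ℝ × ℝ)) = {p, r} := by rw [hq]; simp [Set.insert_comm]
    rw [hset]; exact collinear_pair ℝ p r
  obtain ⟨t, ht1, ht2⟩ : ∃ t : ℝ, r.1 - p.1 = t * (q.1 - p.1) ∧ r.2 - p.2 = t * (q.2 - p.2) := by
    by_cases h1 : q.1 - p.1 = 0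
    · by_cases h2 : q.2 - p.2 = 0
      · exact absurd (Prod.ext (by linarith) (by linarith)) hq
      · refine ⟨(r.2 - p.2) / (q.2 - p.2), ?_, by field_simp⟩
        rw [h1] at h ⊢
        have : (q.2 - p.2) * (r.1 - p.1) = 0 := by linarith
        rcases mul_eq_zero.mp this with h' | h'
        · exact absurd h' h2
        · rw [h']; ring
    · refine ⟨(r.1 - p.1) / (q.1 - p.1), by field_simp, ?_⟩
      field_simp
      nlinarith [h]
  rw [collinear_iff_of_mem (Set.mem_insert p {q, r})]
  refine ⟨q - p, fun x hx => ?_⟩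
  rcases hx with rfl | hx
  · exact ⟨0, by simp⟩
  rcases hx with rfl | hx
  · exact ⟨1, by simp⟩
  rcases hx with rfl
  refine ⟨t, ?_⟩
  have : x - p = t • (q - p) := by
    apply Prod.ext <;> simpa [Prod.sub_def, Prod.smul_def]
  have := congrArg (· + p) this
  simpa [sub_add_cancel] using this

lemma crs_identity (p q r : ℝ × ℝ) :
    (q.1 - p.1) * (r.2 - p.2) - (q.2 - p.2) * (r.1 - p.1) = crs q r + crs r p + crs p q := by
  simp only [crs]; ring

lemma mem_interior_of_crs_pos {p q r : ℝ × ℝ}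
    (h1 : 0 < crs q r) (h2 : 0 < crs r p) (h3 : 0 < crs p q) :
    ((0, 0) : ℝ × ℝ) ∈ interior (convexHull ℝ ({p, q, r} : Set (ℝ × ℝ))) := by
  set D : ℝ := crs q r + crs r p + crs p q with hDdef
  have hD : 0 < D := by positivity
  have hD' : D ≠ 0 := ne_of_gt hD
  have hcol : ¬ Collinear ℝ ({p, q, r} : Set (ℝ × ℝ)) := by
    intro hc
    rw [collinear_iff_of_mem (Set.mem_insert p {q, r})] at hc
    obtain ⟨v, hv⟩ := hc
    obtain ⟨tq, hq⟩ := hv q (by simp)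
    obtain ⟨tr, hr⟩ := hv r (by simp)
    have h0 : (q.1 - p.1) * (r.2 - p.2) - (q.2 - p.2) * (r.1 - p.1) = 0 := by
      rw [hq, hr]; simp [Prod.smul_def]; ring
    rw [crs_identity] at h0
    linarith
  have hind : AffineIndependent ℝ ![p, q, r] := affineIndependent_iff_not_collinear_set.2 hcol
  have htop : affineSpan ℝ (Set.range ![p, q, r]) = ⊤ := by
    rw [hind.affineSpan_eq_top_iff_card_eq_finrank_add_one]
    simp [Module.finrank_prod]
  let b : AffineBasis (Fin 3) ℝ (ℝ × ℝ) := ⟨![p, q, r], hind, htop⟩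
  have hb : ⇑b = ![p, q, r] := rfl
  have hrange : Set.range ⇑b = ({p, q, r} : Set (ℝ × ℝ)) := by
    rw [hb]; simp only [Matrix.range_cons, Matrix.range_empty, Set.union_empty]
    ext x; simp [Set.mem_insert_iff]; tauto
  set w : Fin 3 → ℝ := ![crs q r / D, crs r p / D, crs p q / D] with hwdef
  have hw : ∑ i, w i = 1 := by
    simp only [hwdef, Fin.sum_univ_three, Matrix.cons_val_zero, Matrix.cons_val_one,
      Matrix.head_cons, Matrix.cons_val_two, Matrix.tail_cons]
    field_simp
    exact hDdef.symm
  have hcomb : Finset.univ.affineCombination ℝ ⇑b w = ((0, 0) : ℝ × ℝ) := by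
    rw [hb, Finset.affineCombination_eq_linear_combination _ _ _ hw]
    simp only [hwdef, Fin.sum_univ_three, Matrix.cons_val_zero, Matrix.cons_val_one,
      Matrix.head_cons, Matrix.cons_val_two, Matrix.tail_cons, Prod.smul_def, Prod.mk_add_mk,
      smul_eq_mul, Prod.mk.injEq, Prod.ext_iff]
    constructor <;> (simp only [crs]; field_simp; ring)
  rw [← hrange, b.interior_convexHull]
  intro i
  rw [← hcomb, b.coord_apply_combination_of_mem (Finset.mem_univ i) hw]
  fin_cases i
  · exact div_pos h1 hD
  · exact div_pos h2 hD
  · exact div_pos h3 hD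

lemma crs_of_mem_interior {p q r : ℝ × ℝ}
    (h : ((0, 0) : ℝ × ℝ) ∈ interior (convexHull ℝ ({p, q, r} : Set (ℝ × ℝ)))) :
    (0 < crs q r ∧ 0 < crs r p ∧ 0 < crs p q) ∨
      (crs q r < 0 ∧ crs r p < 0 ∧ crs p q < 0) := by
  have htop : affineSpan ℝ ({p, q, r} : Set (ℝ × ℝ)) = ⊤ := by
    have h1 := (convex_convexHull ℝ ({p, q, r} : Set (ℝ × ℝ))).interior_nonempty_iff_affineSpan_eq_top.mp ⟨_, h⟩
    rwa [affineSpan_convexHull] at h1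
  have hcol : ¬ Collinear ℝ ({p, q, r} : Set (ℝ × ℝ)) := by
    intro hc
    have hv := AffineSubspace.vectorSpan_eq_top_of_affineSpan_eq_top ℝ _ _ htop
    have := hc.finrank_le_one
    rw [hv, finrank_top] at this
    rw [Module.finrank_prod, Module.finrank_self] at this
    omega
  have hind : AffineIndependent ℝ ![p, q, r] := affineIndependent_iff_not_collinear_set.2 hcol
  set D : ℝ := crs q r + crs r p + crs p q with hDdef
  have hD' : D ≠ 0 := by
    intro h0
    exact hcol (collinear_of_crs_eq_zero (by rw [crs_identity]; exact h0))
  have htop' : affineSpan ℝ (Set.range ![p, q, r]) = ⊤ := by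
    rw [hind.affineSpan_eq_top_iff_card_eq_finrank_add_one]
    simp [Module.finrank_prod]
  let b : AffineBasis (Fin 3) ℝ (ℝ × ℝ) := ⟨![p, q, r], hind, htop'⟩
  have hb : ⇑b = ![p, q, r] := rfl
  have hrange : Set.range ⇑b = ({p, q, r} : Set (ℝ × ℝ)) := by
    rw [hb]; simp only [Matrix.range_cons, Matrix.range_empty, Set.union_empty]
    ext x; simp [Set.mem_insert_iff]; tauto
  set w : Fin 3 → ℝ := ![crs q r / D, crs r p / D, crs p q / D] with hwdef
  have hw : ∑ i, w i = 1 := by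
    simp only [hwdef, Fin.sum_univ_three, Matrix.cons_val_zero, Matrix.cons_val_one,
      Matrix.head_cons, Matrix.cons_val_two, Matrix.tail_cons]
    field_simp
    exact hDdef.symm
  have hcomb : Finset.univ.affineCombination ℝ ⇑b w = ((0, 0) : ℝ × ℝ) := by
    rw [hb, Finset.affineCombination_eq_linear_combination _ _ _ hw]
    simp only [hwdef, Fin.sum_univ_three, Matrix.cons_val_zero, Matrix.cons_val_one,
      Matrix.head_cons, Matrix.cons_val_two, Matrix.tail_cons, Prod.smul_def, Prod.mk_add_mk,
      smul_eq_mul, Prod.mk.injEq, Prod.ext_iff]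
    constructor <;> (simp only [crs]; field_simp; ring)
  rw [← hrange, b.interior_convexHull] at h
  have hpos : ∀ i : Fin 3, 0 < w i := by
    intro i
    have := h i
    rwa [← hcomb, b.coord_apply_combination_of_mem (Finset.mem_univ i) hw] at this
  have w0 := hpos 0
  have w1 := hpos 1
  have w2 := hpos 2
  simp only [hwdef, Matrix.cons_val_zero, Matrix.cons_val_one, Matrix.head_cons,
    Matrix.cons_val_two, Matrix.tail_cons] at w0 w1 w2
  rcases hD'.lt_or_gt with hneg | hposD
  · right
    refine ⟨?_, ?_, ?_⟩ <;>
      [rcases div_pos_iff.mp w0 with ⟨_, _⟩ | ⟨_, _⟩;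
       rcases div_pos_iff.mp w1 with ⟨_, _⟩ | ⟨_, _⟩;
       rcases div_pos_iff.mp w2 with ⟨_, _⟩ | ⟨_, _⟩] <;> linarith
  · left
    refine ⟨?_, ?_, ?_⟩ <;>
      [rcases div_pos_iff.mp w0 with ⟨_, _⟩ | ⟨_, _⟩;
       rcases div_pos_iff.mp w1 with ⟨_, _⟩ | ⟨_, _⟩;
       rcases div_pos_iff.mp w2 with ⟨_, _⟩ | ⟨_, _⟩] <;> linarith

lemma crs_anticomm (u v : ℝ × ℝ) : crs u v = -crs v u := by simp only [crs]; ring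

lemma origin_mem_interior_iff (p q r : ℝ × ℝ) :
    ((0, 0) : ℝ × ℝ) ∈ interior (convexHull ℝ ({p, q, r} : Set (ℝ × ℝ))) ↔
      (0 < crs q r ∧ 0 < crs r p ∧ 0 < crs p q) ∨
        (crs q r < 0 ∧ crs r p < 0 ∧ crs p q < 0) := by
  constructor
  · exact crs_of_mem_interior
  · rintro (⟨h1, h2, h3⟩ | ⟨h1, h2, h3⟩)
    · exact mem_interior_of_crs_pos h1 h2 h3
    · have hset : ({q, p, r} : Set (ℝ × ℝ)) = {p, q, r} := Set.insert_comm q p {r}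
      rw [← hset]
      refine mem_interior_of_crs_pos ?_ ?_ ?_ <;>
        rw [crs_anticomm] <;> linarith

noncomputable def ngonP (n k : ℕ) : ℝ × ℝ :=
  (Real.cos (2 * Real.pi * k / n), Real.sin (2 * Real.pi * k / n))

lemma sin_pos_of_lt (n t : ℕ) (ht0 : 0 < t) (htn : 2 * t < n) :
    0 < Real.sin (2 * π * t / n) := by
  have hn0 : (0:ℝ) < n := by
    have : 0 < n := by omega
    exact_mod_cast this
  apply Real.sin_pos_of_pos_of_lt_pi
  · positivity
  · rw [div_lt_iff₀ hn0]
    have : (2 * t : ℝ) < n := by exact_mod_cast htn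
    nlinarith [Real.pi_pos]

lemma sin_neg_of_gt (n t : ℕ) (htn : t < n) (hgt : n < 2 * t) :
    Real.sin (2 * π * t / n) < 0 := by
  have hn0 : (0:ℝ) < n := by
    have : 0 < n := by omega
    exact_mod_cast this
  have h1 : π < 2 * π * t / n := by
    rw [lt_div_iff₀ hn0]
    have : (n:ℝ) < 2 * t := by exact_mod_cast hgt
    nlinarith [Real.pi_pos]
  have h2 : 2 * π * t / n < 2 * π := by
    rw [div_lt_iff₀ hn0]
    have : (t:ℝ) < n := by exact_mod_cast htn
    nlinarith [Real.pi_pos]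
  have := Real.sin_pos_of_pos_of_lt_pi (x := 2 * π * t / n - π) (by linarith) (by linarith)
  rw [Real.sin_sub_pi] at this
  linarith

lemma sin_pos_iff (n t : ℕ) (hodd : Odd n) (ht0 : 0 < t) (htn : t < n) :
    0 < Real.sin (2 * π * t / n) ↔ 2 * t < n := by
  constructor
  · intro hs
    by_contra hle
    have : n < 2 * t := by
      rcases Nat.lt_or_ge (2*t) n with h | h
      · exact absurd h hle
      · rcases Nat.eq_or_lt_of_le h with h' | h'
        · exfalso; exact (Nat.not_odd_iff_even.mpr ⟨t, by omega⟩) (h' ▸ hodd)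
        · exact h'
    exact absurd hs (not_lt.2 (le_of_lt (sin_neg_of_gt n t htn this)))
  · exact sin_pos_of_lt n t ht0

lemma crs_ngon (n a b : ℕ) (hab : a ≤ b) :
    crs (ngonP n a) (ngonP n b) = Real.sin (2 * π * (b - a : ℕ) / n) := by
  have : (2 * π * (b - a : ℕ) / n) = 2 * π * b / n - 2 * π * a / n := by
    rw [Nat.cast_sub hab]; ring
  rw [this, Real.sin_sub, crs, ngonP, ngonP]
  ring

lemma crs_ngon' (n a c : ℕ) (hac : a ≤ c) (hcn : c ≤ n) :
    crs (ngonP n c) (ngonP n a) = Real.sin (2 * π * (n - (c - a) : ℕ) / n) := by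
  have hn0 : 0 < n ∨ n = 0 := by omega
  rcases hn0 with hn0 | rfl
  · have hcast : ((n - (c - a) : ℕ) : ℝ) = n - c + a := by
      rw [Nat.cast_sub (by omega), Nat.cast_sub hac]; ring
    have : (2 * π * (n - (c - a) : ℕ) / n) = (2 * π * a / n - 2 * π * c / n) + 2 * π := by
      rw [hcast]
      field_simp
      ring
    rw [this, Real.sin_add_two_pi, Real.sin_sub, crs, ngonP, ngonP]
    ring
  · simp [crs, ngonP]

lemma key_iff (n a b c : ℕ) (hodd : Odd n) (hab : a < b) (hbc : b < c) (hcn : c < n) :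
    (((0, 0) : ℝ × ℝ) ∈ interior
        (convexHull ℝ ({ngonP n a, ngonP n b, ngonP n c} : Set (ℝ × ℝ)))) ↔
      (2 * (b - a) < n ∧ 2 * (c - b) < n ∧ n < 2 * (c - a)) := by
  rw [origin_mem_interior_iff]
  have e3 : crs (ngonP n a) (ngonP n b) = Real.sin (2 * π * (b - a : ℕ) / n) :=
    crs_ngon n a b (le_of_lt hab)
  have e1 : crs (ngonP n b) (ngonP n c) = Real.sin (2 * π * (c - b : ℕ) / n) :=
    crs_ngon n b c (le_of_lt hbc)
  have e2 : crs (ngonP n c) (ngonP n a) = Real.sin (2 * π * (n - (c - a) : ℕ) / n) :=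
    crs_ngon' n a c (by omega) (by omega)
  rw [e1, e2, e3]
  rw [sin_pos_iff n (c - b) hodd (by omega) (by omega),
      sin_pos_iff n (b - a) hodd (by omega) (by omega),
      sin_pos_iff n (n - (c - a)) hodd (by omega) (by omega)]
  constructor
  · rintro (⟨h1, h2, h3⟩ | ⟨h1, h2, h3⟩)
    · omega
    · -- all negative impossible
      exfalso
      have n1 : n < 2 * (c - b) := by
        by_contra hle
        have : 2 * (c - b) < n := by
          rcases Nat.eq_or_lt_of_le (Nat.le_of_not_lt hle) with h' | h'
          · exact absurd (Nat.not_odd_iff_even.mpr ⟨c - b, by omega⟩) (not_not.2 (h' ▸ hodd))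
          · exact h'
        exact absurd (sin_pos_of_lt n (c - b) (by omega) this) (not_lt.2 (le_of_lt h1))
      have n2 : n < 2 * (n - (c - a)) := by
        by_contra hle
        have : 2 * (n - (c - a)) < n := by
          rcases Nat.eq_or_lt_of_le (Nat.le_of_not_lt hle) with h' | h'
          · exact absurd (Nat.not_odd_iff_even.mpr ⟨n - (c - a), by omega⟩)
              (not_not.2 (h' ▸ hodd))
          · exact h'
        exact absurd (sin_pos_of_lt n (n - (c - a)) (by omega) this) (not_lt.2 (le_of_lt h2))
      have n3 : n < 2 * (b - a) := by
        by_contra hle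
        have : 2 * (b - a) < n := by
          rcases Nat.eq_or_lt_of_le (Nat.le_of_not_lt hle) with h' | h'
          · exact absurd (Nat.not_odd_iff_even.mpr ⟨b - a, by omega⟩) (not_not.2 (h' ▸ hodd))
          · exact h'
        exact absurd (sin_pos_of_lt n (b - a) (by omega) this) (not_lt.2 (le_of_lt h3))
      omega
  · intro ⟨h1, h2, h3⟩
    left
    omega

lemma six_mul_sum_sq (m : ℕ) :
    6 * ∑ e ∈ Finset.range m, (e + 1) * (e + 1) = m * (m + 1) * (2 * m + 1) := by
  induction m with
  | zero => simp
  | succ k ih => rw [Finset.sum_range_succ, Nat.mul_add, ih]; ring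

lemma good_card (n m : ℕ) (hm : n = 2 * m + 1) :
    ((Finset.range n ×ˢ Finset.range n ×ˢ Finset.range n).filter
      (fun t : ℕ × ℕ × ℕ => t.1 < t.2.1 ∧ t.2.1 < t.2.2 ∧ 2 * (t.2.1 - t.1) < n ∧
        2 * (t.2.2 - t.2.1) < n ∧ n < 2 * (t.2.2 - t.1))).card
      = ∑ e ∈ Finset.range m, (e + 1) * (e + 1) := by
  classical
  set H : Finset (ℕ × ℕ × ℕ) := (Finset.range m).biUnion
    (fun e => ({e} : Finset ℕ) ×ˢ (Finset.range (e + 1) ×ˢ Finset.range (e + 1))) with hHdef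
  have h1 : ((Finset.range n ×ˢ Finset.range n ×ˢ Finset.range n).filter
      (fun t : ℕ × ℕ × ℕ => t.1 < t.2.1 ∧ t.2.1 < t.2.2 ∧ 2 * (t.2.1 - t.1) < n ∧
        2 * (t.2.2 - t.2.1) < n ∧ n < 2 * (t.2.2 - t.1))).card = H.card := by
    apply Finset.card_nbij'
      (i := fun t => (2 * m - (t.2.2 - t.1), t.1, t.2.1 - (t.2.2 - m)))
      (j := fun t => (t.2.1, t.2.2 + t.2.1 + m - t.1, t.2.1 + 2 * m - t.1))
    · rintro ⟨a, b, c⟩ ht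
      simp only [Finset.mem_coe, Finset.mem_filter, Finset.mem_product, Finset.mem_range] at ht
      rw [hHdef, Finset.mem_coe, Finset.mem_biUnion]
      refine ⟨2 * m - (c - a), ?_, ?_⟩
      · rw [Finset.mem_range]; omega
      · simp only [Finset.mem_product, Finset.mem_singleton, Finset.mem_range]
        exact ⟨by trivial, by omega, by omega⟩
    · rintro ⟨e, a, t⟩ ht
      rw [hHdef, Finset.mem_coe, Finset.mem_biUnion] at ht
      obtain ⟨e', he', hmem⟩ := ht
      simp only [Finset.mem_product, Finset.mem_singleton, Finset.mem_range] at hmem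
      rw [Finset.mem_range] at he'
      obtain ⟨rfl, ha, htt⟩ := hmem
      simp only [Finset.mem_coe, Finset.mem_filter, Finset.mem_product, Finset.mem_range]
      refine ⟨⟨?_, ?_, ?_⟩, ?_, ?_, ?_, ?_, ?_⟩ <;> omega
    · rintro ⟨a, b, c⟩ ht
      simp only [Finset.mem_coe, Finset.mem_filter, Finset.mem_product, Finset.mem_range] at ht
      refine Prod.ext ?_ (Prod.ext ?_ ?_) <;> dsimp only <;> omega
    · rintro ⟨e, a, t⟩ ht
      rw [hHdef, Finset.mem_coe, Finset.mem_biUnion] at ht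
      obtain ⟨e', he', hmem⟩ := ht
      simp only [Finset.mem_product, Finset.mem_singleton, Finset.mem_range] at hmem
      rw [Finset.mem_range] at he'
      obtain ⟨rfl, ha, htt⟩ := hmem
      refine Prod.ext ?_ (Prod.ext ?_ ?_) <;> dsimp only <;> omega
  rw [h1, hHdef, Finset.card_biUnion]
  · apply Finset.sum_congr rfl
    intro e _
    simp [Finset.card_product]
  · intro x _ y _ hxy
    rw [Function.onFun, Finset.disjoint_left]
    rintro ⟨u, v⟩ hu hv
    simp only [Finset.mem_product, Finset.mem_singleton] at hu hv
    exact hxy (hu.1 ▸ hv.1)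

lemma ngonP_inj (n j k : ℕ) (hj : j < n) (hk : k < n) (h : ngonP n j = ngonP n k) : j = k := by
  have hn0 : (0:ℝ) < n := by
    have : 0 < n := by omega
    exact_mod_cast this
  rw [ngonP, ngonP, Prod.mk.injEq] at h
  obtain ⟨hc, hs⟩ := h
  have h1 : Real.cos (2 * π * j / n - 2 * π * k / n) = 1 := by
    rw [Real.cos_sub, hc, hs]
    rw [← Real.sin_sq_add_cos_sq (2 * π * k / n)]
    ring
  have hjb : 0 ≤ 2 * π * (j:ℝ) / n := by positivity
  have hkb : 0 ≤ 2 * π * (k:ℝ) / n := by positivity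
  have hjr : 2 * π * (j:ℝ) / n < 2 * π := by
    rw [div_lt_iff₀ hn0]
    have : (j:ℝ) < n := by exact_mod_cast hj
    nlinarith [Real.pi_pos]
  have hkr : 2 * π * (k:ℝ) / n < 2 * π := by
    rw [div_lt_iff₀ hn0]
    have : (k:ℝ) < n := by exact_mod_cast hk
    nlinarith [Real.pi_pos]
  rw [Real.cos_eq_one_iff_of_lt_of_lt (by linarith) (by linarith)] at h1
  have h2 : (2 * π / n) * ((j:ℝ) - k) = 0 := by rw [← h1]; ring
  have h3 : ((j:ℝ) - k) = 0 := by
    rcases mul_eq_zero.mp h2 with h | h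
    · exact absurd h (by positivity)
    · exact h
  have : (j:ℝ) = k := by linarith
  exact_mod_cast this

lemma exists_sorted_three (K : Finset ℕ) (h : K.card = 3) :
    ∃ a b c, a < b ∧ b < c ∧ K = {a, b, c} := by
  obtain ⟨x, y, z, hxy, hxz, hyz, rfl⟩ := Finset.card_eq_three.mp h
  have perm : ∀ a b c : ℕ, ({x, y, z} : Finset ℕ) = {a, b, c} ∨ True := fun _ _ _ => Or.inr trivial
  rcases lt_trichotomy x y with h1 | h1 | h1
  · rcases lt_trichotomy y z with h2 | h2 | h2
    · exact ⟨x, y, z, h1, h2, rfl⟩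
    · exact absurd h2 hyz
    · rcases lt_trichotomy x z with h3 | h3 | h3
      · exact ⟨x, z, y, h3, h2, by ext t; simp; tauto⟩
      · exact absurd h3 hxz
      · exact ⟨z, x, y, h3, h1, by ext t; simp; tauto⟩
  · exact absurd h1 hxy
  · rcases lt_trichotomy x z with h2 | h2 | h2
    · exact ⟨y, x, z, h1, h2, by ext t; simp; tauto⟩
    · exact absurd h2 hxz
    · rcases lt_trichotomy y z with h3 | h3 | h3
      · exact ⟨y, z, x, h3, h2, by ext t; simp; tauto⟩
      · exact absurd h3 hyz
      · exact ⟨z, y, x, h3, h1, by ext t; simp; tauto⟩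

theorem count_triangles_containing_origin (n : ℕ) (hn : 3 ≤ n) (hodd : Odd n) :
    Set.ncard {T : Finset (ℝ × ℝ) | T ⊆ regularNgon n ∧ T.card = 3 ∧
        ((0, 0) : ℝ × ℝ) ∈ interior (convexHull ℝ (T : Set (ℝ × ℝ)))} =
      n * (n - 1) * (n + 1) / 24 := by
  classical
  obtain ⟨m, hm⟩ := hodd
  have hreg : regularNgon n = (Finset.range n).image (ngonP n) := rfl
  set G : Finset (ℕ × ℕ × ℕ) := (Finset.range n ×ˢ Finset.range n ×ˢ Finset.range n).filter
      (fun t : ℕ × ℕ × ℕ => t.1 < t.2.1 ∧ t.2.1 < t.2.2 ∧ 2 * (t.2.1 - t.1) < n ∧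
        2 * (t.2.2 - t.2.1) < n ∧ n < 2 * (t.2.2 - t.1)) with hGdef
  set f : ℕ × ℕ × ℕ → Finset (ℝ × ℝ) :=
    fun t => {ngonP n t.1, ngonP n t.2.1, ngonP n t.2.2} with hfdef
  have hset : {T : Finset (ℝ × ℝ) | T ⊆ regularNgon n ∧ T.card = 3 ∧
        ((0, 0) : ℝ × ℝ) ∈ interior (convexHull ℝ (T : Set (ℝ × ℝ)))} = ↑(G.image f) := by
    ext T
    simp only [Set.mem_setOf_eq, Finset.coe_image, Set.mem_image, Finset.mem_coe]
    constructor
    · rintro ⟨hsub, hcard, hint⟩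
      rw [hreg] at hsub
      obtain ⟨K, hK, hKT⟩ := Finset.subset_image_iff.mp hsub
      have hKcard : K.card = 3 := by
        rw [← hcard, ← hKT]
        exact (Finset.card_image_of_injOn (fun x hx y hy h => ngonP_inj n x y
          (Finset.mem_range.mp (hK hx)) (Finset.mem_range.mp (hK hy)) h)).symm
      obtain ⟨a, b, c, hab, hbc, rfl⟩ := exists_sorted_three K hKcard
      have han : a < n := Finset.mem_range.mp (hK (by simp))
      have hbn : b < n := Finset.mem_range.mp (hK (by simp))
      have hcn : c < n := Finset.mem_range.mp (hK (by simp))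
      have hTeq : T = f (a, b, c) := by
        rw [← hKT]
        simp only [hfdef, Finset.image_insert, Finset.image_singleton]
      have hcoe : (T : Set (ℝ × ℝ)) = {ngonP n a, ngonP n b, ngonP n c} := by
        rw [hTeq]; simp [hfdef]
      rw [hcoe] at hint
      have hgaps := (key_iff n a b c ⟨m, hm⟩ hab hbc hcn).mp hint
      refine ⟨(a, b, c), ?_, hTeq.symm⟩
      rw [hGdef]
      simp only [Finset.mem_filter, Finset.mem_product, Finset.mem_range]
      exact ⟨⟨han, hbn, hcn⟩, hab, hbc, hgaps⟩
    · rintro ⟨⟨a, b, c⟩, hmem, rfl⟩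
      rw [hGdef] at hmem
      simp only [Finset.mem_filter, Finset.mem_product, Finset.mem_range] at hmem
      obtain ⟨⟨han, hbn, hcn⟩, hab, hbc, h1, h2, h3⟩ := hmem
      have hne1 : ngonP n a ≠ ngonP n b := fun h => by
        have := ngonP_inj n a b han hbn h; omega
      have hne2 : ngonP n a ≠ ngonP n c := fun h => by
        have := ngonP_inj n a c han hcn h; omega
      have hne3 : ngonP n b ≠ ngonP n c := fun h => by
        have := ngonP_inj n b c hbn hcn h; omega
      refine ⟨?_, ?_, ?_⟩
      · rw [hreg]
        intro x hx
        simp only [hfdef, Finset.mem_insert, Finset.mem_singleton] at hx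
        rcases hx with rfl | rfl | rfl
        · exact Finset.mem_image_of_mem _ (Finset.mem_range.mpr han)
        · exact Finset.mem_image_of_mem _ (Finset.mem_range.mpr hbn)
        · exact Finset.mem_image_of_mem _ (Finset.mem_range.mpr hcn)
      · exact Finset.card_eq_three.mpr ⟨_, _, _, hne1, hne2, hne3, rfl⟩
      · have hcoe : ((f (a, b, c) : Finset (ℝ × ℝ)) : Set (ℝ × ℝ)) =
            {ngonP n a, ngonP n b, ngonP n c} := by simp [hfdef]
        rw [hcoe]
        exact (key_iff n a b c ⟨m, hm⟩ hab hbc hcn).mpr ⟨h1, h2, h3⟩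
  rw [hset, Set.ncard_coe_finset]
  have hinj : Set.InjOn f ↑G := by
    rintro ⟨a, b, c⟩ hmem ⟨a', b', c'⟩ hmem' heq
    rw [Finset.mem_coe, hGdef] at hmem hmem'
    simp only [Finset.mem_filter, Finset.mem_product, Finset.mem_range] at hmem hmem'
    obtain ⟨⟨han, hbn, hcn⟩, hab, hbc, -⟩ := hmem
    obtain ⟨⟨han', hbn', hcn'⟩, hab', hbc', -⟩ := hmem'
    simp only [hfdef] at heq
    have step : ∀ x, x < n →
        ngonP n x ∈ ({ngonP n a', ngonP n b', ngonP n c'} : Finset (ℝ × ℝ)) →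
        (x = a' ∨ x = b' ∨ x = c') := by
      intro x hx hmemx
      simp only [Finset.mem_insert, Finset.mem_singleton] at hmemx
      rcases hmemx with h | h | h
      · exact Or.inl (ngonP_inj n x a' hx han' h)
      · exact Or.inr (Or.inl (ngonP_inj n x b' hx hbn' h))
      · exact Or.inr (Or.inr (ngonP_inj n x c' hx hcn' h))
    have step' : ∀ x, x < n →
        ngonP n x ∈ ({ngonP n a, ngonP n b, ngonP n c} : Finset (ℝ × ℝ)) →
        (x = a ∨ x = b ∨ x = c) := by
      intro x hx hmemx
      simp only [Finset.mem_insert, Finset.mem_singleton] at hmemx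
      rcases hmemx with h | h | h
      · exact Or.inl (ngonP_inj n x a hx han h)
      · exact Or.inr (Or.inl (ngonP_inj n x b hx hbn h))
      · exact Or.inr (Or.inr (ngonP_inj n x c hx hcn h))
    have d1 := step a han (by rw [← heq]; simp)
    have d2 := step b hbn (by rw [← heq]; simp)
    have d3 := step c hcn (by rw [← heq]; simp)
    have d4 := step' a' han' (by rw [heq]; simp)
    have d5 := step' b' hbn' (by rw [heq]; simp)
    have d6 := step' c' hcn' (by rw [heq]; simp)
    refine Prod.ext ?_ (Prod.ext ?_ ?_) <;> dsimp only <;> omega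
  rw [Finset.card_image_of_injOn hinj]
  have hcard := good_card n m hm
  rw [← hGdef] at hcard
  have h6 := six_mul_sum_sq m
  set s := ∑ e ∈ Finset.range m, (e + 1) * (e + 1) with hsdef
  have h24 : n * (n - 1) * (n + 1) = 24 * s := by
    have e1 : n - 1 = 2 * m := by omega
    have e2 : n + 1 = 2 * m + 2 := by omega
    rw [e1, e2, hm]
    calc (2 * m + 1) * (2 * m) * (2 * m + 2) = 4 * (m * (m + 1) * (2 * m + 1)) := by ring
      _ = 4 * (6 * s) := by rw [h6]
      _ = 24 * s := by ring
  rw [hcard, h24]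
  omega
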